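/- (Corollary 2, monotonicity of the expected number of happy agents in the number of available bins) Fix natural numbers n ≥ 1, d ≥ 1, and s ≥ 1. For an integer k with 1 ≤ k ≤ n, let σ(k) = 1 - ((n-k)/n)^d and define E(k) = k · Σ_{f=1}^{s} [1 - ((k-1)/k)^f] · C(s, f) · σ(k)^f · (1 - σ(k))^{s-f}. Then E(k) is monotone non-decreasing in k: for every k with 1 ≤ k < n, E(k+1) ≥ E(k). Consequently, if a configuration of s schedulers each querying d hosts guarantees an expected decline ratio at most r when exactly k bins are available, the same guarantee holds whenever k is merely a lower bound on the number of available bins. -/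

import Mathlib

open Finset

/-- `σ(k) = 1 - ((n-k)/n)^d`: the probability that an agent querying `d` of `n`
bins uniformly at random is potentially happy when `k` bins are available. -/
noncomputable def sigmaProb (n d k : ℕ) : ℝ :=
  1 - (((n : ℝ) - (k : ℝ)) / (n : ℝ)) ^ d

/-- `E(k) = k · Σ_{f=1}^{s} [1 - ((k-1)/k)^f] · C(s,f) · σ(k)^f · (1-σ(k))^(s-f)`:
the expected number of happy agents in the balls-and-bins model with `n` bins of
which `k` are available, `s` agents each querying `d` bins. -/
noncomputable def expectedHappyCount (n d s k : ℕ) : ℝ :=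
  (k : ℝ) * ∑ f ∈ Finset.Icc 1 s,
    (1 - (((k : ℝ) - 1) / (k : ℝ)) ^ f) * (s.choose f : ℝ) *
      (sigmaProb n d k) ^ f * (1 - sigmaProb n d k) ^ (s - f)

lemma sum_pow_sub (s : ℕ) (σ t : ℝ) :
    ∑ f ∈ Finset.Icc 1 s, (1 - t ^ f) * (s.choose f : ℝ) * σ ^ f * (1 - σ) ^ (s - f)
      = (σ + (1 - σ)) ^ s - (σ * t + (1 - σ)) ^ s := by
  have h1 : ∀ f : ℕ, (1 - t ^ f) * (s.choose f : ℝ) * σ ^ f * (1 - σ) ^ (s - f)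
      = σ ^ f * (1 - σ) ^ (s - f) * (s.choose f : ℝ)
        - (σ * t) ^ f * (1 - σ) ^ (s - f) * (s.choose f : ℝ) := by
    intro f; rw [mul_pow]; ring
  calc ∑ f ∈ Finset.Icc 1 s, (1 - t ^ f) * (s.choose f : ℝ) * σ ^ f * (1 - σ) ^ (s - f)
      = ∑ f ∈ Finset.Icc 1 s,
          (σ ^ f * (1 - σ) ^ (s - f) * (s.choose f : ℝ)
            - (σ * t) ^ f * (1 - σ) ^ (s - f) * (s.choose f : ℝ)) :=
        Finset.sum_congr rfl (fun f _ => h1 f)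
    _ = ∑ f ∈ Finset.range (s + 1),
          (σ ^ f * (1 - σ) ^ (s - f) * (s.choose f : ℝ)
            - (σ * t) ^ f * (1 - σ) ^ (s - f) * (s.choose f : ℝ)) := by
        apply Finset.sum_subset
        · intro x hx
          simp only [Finset.mem_Icc] at hx
          exact Finset.mem_range.2 (by omega)
        · intro x hx hx'
          simp only [Finset.mem_range] at hx
          simp only [Finset.mem_Icc, not_and, not_le] at hx'
          have : x = 0 := by omega
          subst this
          simp
    _ = (∑ f ∈ Finset.range (s + 1), σ ^ f * (1 - σ) ^ (s - f) * (s.choose f : ℝ))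
        - ∑ f ∈ Finset.range (s + 1), (σ * t) ^ f * (1 - σ) ^ (s - f) * (s.choose f : ℝ) :=
        Finset.sum_sub_distrib _ _
    _ = (σ + (1 - σ)) ^ s - (σ * t + (1 - σ)) ^ s := by rw [add_pow, add_pow]

lemma expectedHappy_closed (n d s k : ℕ) (hk : 1 ≤ k) :
    expectedHappyCount n d s k = (k : ℝ) * (1 - (1 - sigmaProb n d k / k) ^ s) := by
  have hk0 : (k : ℝ) ≠ 0 := by
    have : (1 : ℝ) ≤ (k : ℝ) := by exact_mod_cast hk
    linarith
  unfold expectedHappyCount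
  rw [sum_pow_sub]
  have h1 : sigmaProb n d k + (1 - sigmaProb n d k) = 1 := by ring
  have h2 : sigmaProb n d k * (((k : ℝ) - 1) / k) + (1 - sigmaProb n d k)
      = 1 - sigmaProb n d k / k := by
    field_simp
    ring
  rw [h1, h2, one_pow]

lemma bern_aux (m : ℕ) (t : ℝ) (h0 : 0 ≤ t) (h1 : t ≤ 1) :
    (1 - t) ^ m * (1 + (m : ℝ) * t) ≤ 1 := by
  have hb : 1 + (m : ℝ) * t ≤ (1 + t) ^ m := by
    have := one_add_mul_le_pow (a := t) (by linarith) m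
    linarith
  calc (1 - t) ^ m * (1 + (m : ℝ) * t)
      ≤ (1 - t) ^ m * (1 + t) ^ m :=
        mul_le_mul_of_nonneg_left hb (pow_nonneg (by linarith) m)
    _ = (1 - t ^ 2) ^ m := by rw [← mul_pow]; congr 1; ring
    _ ≤ 1 := pow_le_one₀ (by nlinarith) (by nlinarith)

lemma pow_sub_pow_le_aux (m : ℕ) (u v : ℝ) (hv : 0 ≤ v) (huv : v ≤ u) :
    u ^ (m + 1) - v ^ (m + 1) ≤ ((m : ℝ) + 1) * u ^ m * (u - v) := by
  induction m with
  | zero => simp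
  | succ m ih =>
    have hu : 0 ≤ u := le_trans hv huv
    have hpow : v ^ (m + 1) ≤ u ^ (m + 1) := pow_le_pow_left₀ hv huv (m + 1)
    have hum : 0 ≤ u ^ m := pow_nonneg hu m
    have key : u ^ (m + 2) - v ^ (m + 2)
        = u * (u ^ (m + 1) - v ^ (m + 1)) + (u - v) * v ^ (m + 1) := by ring
    have h1 : u * (u ^ (m + 1) - v ^ (m + 1)) ≤ u * (((m : ℝ) + 1) * u ^ m * (u - v)) :=
      mul_le_mul_of_nonneg_left ih hu
    have h2 : (u - v) * v ^ (m + 1) ≤ (u - v) * u ^ (m + 1) :=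
      mul_le_mul_of_nonneg_left hpow (by linarith)
    have : u * (((m : ℝ) + 1) * u ^ m * (u - v)) + (u - v) * u ^ (m + 1)
        = ((m : ℝ) + 2) * u ^ (m + 1) * (u - v) := by ring
    push_cast
    nlinarith [h1, h2]

lemma key_step (m : ℕ) (K σ : ℝ) (hK : 1 ≤ K) (h0 : 0 ≤ σ) (h1 : σ ≤ 1) :
    K * (1 - (1 - σ / K) ^ (m + 1)) ≤ (K + 1) * (1 - (1 - σ / (K + 1)) ^ (m + 1)) := by
  have hK0 : (0 : ℝ) < K := by linarith
  have hK10 : (0 : ℝ) < K + 1 := by linarith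
  set u : ℝ := 1 - σ / (K + 1) with hu_def
  set v : ℝ := 1 - σ / K with hv_def
  have hv0 : 0 ≤ v := by
    have : σ / K ≤ 1 := (div_le_one hK0).2 (by linarith)
    simp only [hv_def]; linarith
  have huv : v ≤ u := by
    have : σ / (K + 1) ≤ σ / K := by
      apply div_le_div_of_nonneg_left h0 hK0 (by linarith)
    simp only [hu_def, hv_def]; linarith
  have hdiff : K * (u - v) = σ / (K + 1) := by
    simp only [hu_def, hv_def]
    field_simp
    ring
  have h2 : u ^ (m + 1) - v ^ (m + 1) ≤ ((m : ℝ) + 1) * u ^ m * (u - v) :=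
    pow_sub_pow_le_aux m u v hv0 huv
  have ht0 : 0 ≤ σ / (K + 1) := div_nonneg h0 hK10.le
  have ht1 : σ / (K + 1) ≤ 1 := (div_le_one hK10).2 (by linarith)
  have hum : 0 ≤ u ^ m := pow_nonneg (by simp only [hu_def]; linarith) m
  have h3 : (K + 1) * u ^ (m + 1) - K * v ^ (m + 1)
      ≤ u ^ m * (1 + (m : ℝ) * (σ / (K + 1))) := by
    have e1 : (K + 1) * u ^ (m + 1) - K * v ^ (m + 1)
        = u ^ (m + 1) + K * (u ^ (m + 1) - v ^ (m + 1)) := by ring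
    have e2 : K * (u ^ (m + 1) - v ^ (m + 1)) ≤ K * (((m : ℝ) + 1) * u ^ m * (u - v)) :=
      mul_le_mul_of_nonneg_left h2 hK0.le
    have e3 : K * (((m : ℝ) + 1) * u ^ m * (u - v))
        = ((m : ℝ) + 1) * u ^ m * (σ / (K + 1)) := by
      rw [← hdiff]; ring
    have e4 : u ^ (m + 1) + ((m : ℝ) + 1) * u ^ m * (σ / (K + 1))
        = u ^ m * (u + ((m : ℝ) + 1) * (σ / (K + 1))) := by ring
    have e5 : u + ((m : ℝ) + 1) * (σ / (K + 1)) = 1 + (m : ℝ) * (σ / (K + 1)) := by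
      simp only [hu_def]; ring
    calc (K + 1) * u ^ (m + 1) - K * v ^ (m + 1)
        = u ^ (m + 1) + K * (u ^ (m + 1) - v ^ (m + 1)) := e1
      _ ≤ u ^ (m + 1) + ((m : ℝ) + 1) * u ^ m * (σ / (K + 1)) := by rw [← e3]; linarith
      _ = u ^ m * (u + ((m : ℝ) + 1) * (σ / (K + 1))) := e4
      _ = u ^ m * (1 + (m : ℝ) * (σ / (K + 1))) := by rw [e5]
  have h4 : u ^ m * (1 + (m : ℝ) * (σ / (K + 1))) ≤ 1 := by
    have := bern_aux m (σ / (K + 1)) ht0 ht1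
    simpa [hu_def] using this
  linarith

lemma sigma_nonneg (n d k : ℕ) (hn : 1 ≤ n) (hk : k ≤ n) : 0 ≤ sigmaProb n d k := by
  unfold sigmaProb
  have hn0 : (0 : ℝ) < n := by exact_mod_cast hn
  have hb0 : (0 : ℝ) ≤ ((n : ℝ) - k) / n := by
    apply div_nonneg _ hn0.le
    have : (k : ℝ) ≤ n := by exact_mod_cast hk
    linarith
  have hb1 : ((n : ℝ) - k) / n ≤ 1 := by
    rw [div_le_one hn0]
    have : (0 : ℝ) ≤ (k : ℝ) := Nat.cast_nonneg k
    linarith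
  have := pow_le_one₀ hb0 hb1 (n := d)
  linarith

lemma sigma_le_one (n d k : ℕ) (hn : 1 ≤ n) (hk : k ≤ n) : sigmaProb n d k ≤ 1 := by
  unfold sigmaProb
  have hn0 : (0 : ℝ) < n := by exact_mod_cast hn
  have hb0 : (0 : ℝ) ≤ ((n : ℝ) - k) / n := by
    apply div_nonneg _ hn0.le
    have : (k : ℝ) ≤ n := by exact_mod_cast hk
    linarith
  have := pow_nonneg hb0 d
  linarith

lemma sigma_mono (n d k : ℕ) (hn : 1 ≤ n) (hk : k + 1 ≤ n) :
    sigmaProb n d k ≤ sigmaProb n d (k + 1) := by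
  unfold sigmaProb
  have hn0 : (0 : ℝ) < n := by exact_mod_cast hn
  have hb0 : (0 : ℝ) ≤ ((n : ℝ) - (k + 1 : ℕ)) / n := by
    apply div_nonneg _ hn0.le
    have : ((k + 1 : ℕ) : ℝ) ≤ n := by exact_mod_cast hk
    linarith
  have hle : ((n : ℝ) - (k + 1 : ℕ)) / n ≤ ((n : ℝ) - k) / n := by
    gcongr
    push_cast
    linarith
  have := pow_le_pow_left₀ hb0 hle d
  linarith

/-- Corollary 2: `E(k)` is monotone non-decreasing in the number
`k` of available bins: `E(k+1) ≥ E(k)` for `1 ≤ k < n`.  Consequently, if a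
configuration of `s` schedulers each querying `d` hosts guarantees an expected
decline ratio at most `r` (i.e. `E(k) ≥ s·(1-r)`) when exactly `k` bins are
available, the same guarantee holds whenever `k` is merely a lower bound on the
number of available bins. -/
theorem stmt11 (n d s : ℕ) (hn : 1 ≤ n) (hd : 1 ≤ d) (hs : 1 ≤ s) :
    (∀ k : ℕ, 1 ≤ k → k < n →
      expectedHappyCount n d s (k + 1) ≥ expectedHappyCount n d s k) ∧
    (∀ (r : ℝ) (k k' : ℕ), 1 ≤ k → k ≤ k' → k' ≤ n →
      expectedHappyCount n d s k ≥ (s : ℝ) * (1 - r) →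
      expectedHappyCount n d s k' ≥ (s : ℝ) * (1 - r)) := by
  obtain ⟨m, rfl⟩ : ∃ m, s = m + 1 := ⟨s - 1, by omega⟩
  have part1 : ∀ k : ℕ, 1 ≤ k → k < n →
      expectedHappyCount n d (m + 1) (k + 1) ≥ expectedHappyCount n d (m + 1) k := by
    intro k hk hkn
    have hk1n : k + 1 ≤ n := hkn
    have hK1 : (1 : ℝ) ≤ (k : ℝ) := by exact_mod_cast hk
    have hK0 : (0 : ℝ) < (k : ℝ) + 1 := by linarith
    set σ := sigmaProb n d k with hσ
    set σ' := sigmaProb n d (k + 1) with hσ'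
    have hσ0 : 0 ≤ σ := sigma_nonneg n d k hn (by omega)
    have hσ1 : σ ≤ 1 := sigma_le_one n d k hn (by omega)
    have hσ'0 : 0 ≤ σ' := sigma_nonneg n d (k + 1) hn hk1n
    have hσ'1 : σ' ≤ 1 := sigma_le_one n d (k + 1) hn hk1n
    have hmono : σ ≤ σ' := sigma_mono n d k hn hk1n
    rw [ge_iff_le, expectedHappy_closed n d (m + 1) k hk,
      expectedHappy_closed n d (m + 1) (k + 1) (by omega)]
    have cast1 : ((k + 1 : ℕ) : ℝ) = (k : ℝ) + 1 := by push_cast; ring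
    rw [cast1]
    calc (k : ℝ) * (1 - (1 - σ / k) ^ (m + 1))
        ≤ ((k : ℝ) + 1) * (1 - (1 - σ / ((k : ℝ) + 1)) ^ (m + 1)) :=
          key_step m (k : ℝ) σ hK1 hσ0 hσ1
      _ ≤ ((k : ℝ) + 1) * (1 - (1 - σ' / ((k : ℝ) + 1)) ^ (m + 1)) := by
          apply mul_le_mul_of_nonneg_left _ hK0.le
          have hb0 : 0 ≤ 1 - σ' / ((k : ℝ) + 1) := by
            have : σ' / ((k : ℝ) + 1) ≤ 1 := (div_le_one hK0).2 (by linarith)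
            linarith
          have hble : 1 - σ' / ((k : ℝ) + 1) ≤ 1 - σ / ((k : ℝ) + 1) := by
            have : σ / ((k : ℝ) + 1) ≤ σ' / ((k : ℝ) + 1) := by gcongr
            linarith
          have := pow_le_pow_left₀ hb0 hble (m + 1)
          linarith
  refine ⟨part1, ?_⟩
  intro r k k' hk hkk' hk'n hE
  have main : ∀ j, k ≤ j → j ≤ n →
      expectedHappyCount n d (m + 1) k ≤ expectedHappyCount n d (m + 1) j := by
    intro j hle
    induction j, hle using Nat.le_induction with
    | base => intro _; exact le_refl _
    | succ p hp ih =>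
      intro hpn
      exact le_trans (ih (by omega)) (part1 p (by omega) (by omega))
  exact le_trans hE (main k' hkk' hk'n)
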